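/- (Lemma 4.1(ii), full statement) Let n, m be positive integers with m < n/2. Let Π, Π̃: C^n × C^n → C^m be symmetric C-bilinear maps, ⟨·,·⟩ a positive definite Hermitian inner product on C^m, and (·,·) the standard Hermitian inner product on C^n. Suppose the traceless components of the quartic forms X ↦ ⟨Π(X,X),Π(X,X)⟩ and X ↦ ⟨Π̃(X,X),Π̃(X,X)⟩ coincide; equivalently, suppose there is a Hermitian form H on C^n with ⟨Π(X,X),Π(X,X)⟩ − ⟨Π̃(X,X),Π̃(X,X)⟩ = (X,X)·H(X,X) for all X. Then H ≡ 0 and there exists a unitary U of C^m with Π̃ = U ∘ Π. -/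

import Mathlib

set_option maxHeartbeats 1000000

private lemma extract11 (a00 a10 a01 a20 a02 a11 a21 a12 a22 : ℂ)
    (h : ∀ t : ℂ, a00 + a10*t + a01*(starRingEnd ℂ t) + a20*t^2 + a02*(starRingEnd ℂ t)^2
      + a11*(t*starRingEnd ℂ t) + a21*(t^2*starRingEnd ℂ t) + a12*(t*(starRingEnd ℂ t)^2)
      + a22*(t^2*(starRingEnd ℂ t)^2) = 0) : a11 = 0 := by
  have h0 := h 0
  have h1 := h (-Complex.I)
  have h2 := h (-1 + Complex.I)
  have h3 := h Complex.I
  have h4 := h (2*Complex.I)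
  have h5 := h (-(2*Complex.I))
  have h6 := h (1 + Complex.I)
  simp only [map_zero, map_neg, map_add, map_one, map_mul, map_ofNat, Complex.conj_I]
    at h0 h1 h2 h3 h4 h5 h6
  linear_combination (-1 : ℂ)*h0 + (1/2 : ℂ)*h1 + (1/4 : ℂ)*h2 + (1/6 : ℂ)*h3
    + (-1/8 : ℂ)*h4 + (-1/24 : ℂ)*h5 + (1/4 : ℂ)*h6
    + ((-1/2)*a02 + (1/2)*a11 + (1/2)*Complex.I*a12 + (-1/2)*a20 + (-1/2)*Complex.I*a21
       + (-1/2 + (3/2)*Complex.I^2)*a22) * Complex.I_sq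

private lemma extract10 (a00 a10 a01 a11 : ℂ)
    (h : ∀ t : ℂ, a00 + a10*t + a01*(starRingEnd ℂ t) + a11*(t*starRingEnd ℂ t) = 0) :
    a10 = 0 ∧ a01 = 0 := by
  have h1 := h 1
  have hm1 := h (-1)
  have hi := h Complex.I
  have hmi := h (-Complex.I)
  simp only [map_one, map_neg, Complex.conj_I] at h1 hm1 hi hmi
  constructor
  · linear_combination (1/4 : ℂ)*h1 + (-1/4 : ℂ)*hm1 + (-1/4 : ℂ)*Complex.I*hi
      + (1/4 : ℂ)*Complex.I*hmi + ((a10 - a01)/2) * Complex.I_sq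
  · linear_combination (1/4 : ℂ)*h1 + (-1/4 : ℂ)*hm1 + (1/4 : ℂ)*Complex.I*hi
      + (-1/4 : ℂ)*Complex.I*hmi + ((a01 - a10)/2) * Complex.I_sq

private lemma quadpolar {V : Type*} [AddCommGroup V] [Module ℂ V]
    (S : V → V → V → V → ℂ)
    (h1a : ∀ X X' Y Z W, S (X + X') Y Z W = S X Y Z W + S X' Y Z W)
    (h1s : ∀ (c : ℂ) X Y Z W, S (c • X) Y Z W = c * S X Y Z W)
    (h2a : ∀ X Y Y' Z W, S X (Y + Y') Z W = S X Y Z W + S X Y' Z W)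
    (h2s : ∀ (c : ℂ) X Y Z W, S X (c • Y) Z W = c * S X Y Z W)
    (h3a : ∀ X Y Z Z' W, S X Y (Z + Z') W = S X Y Z W + S X Y Z' W)
    (h3s : ∀ (c : ℂ) X Y Z W, S X Y (c • Z) W = (starRingEnd ℂ c) * S X Y Z W)
    (h4a : ∀ X Y Z W W', S X Y Z (W + W') = S X Y Z W + S X Y Z W')
    (h4s : ∀ (c : ℂ) X Y Z W, S X Y Z (c • W) = (starRingEnd ℂ c) * S X Y Z W)
    (sym12 : ∀ X Y Z W, S X Y Z W = S Y X Z W)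
    (sym34 : ∀ X Y Z W, S X Y Z W = S X Y W Z)
    (diag : ∀ X, S X X X X = 0) :
    ∀ X Y Z W, S X Y Z W = 0 := by
  have step1 : ∀ X Y, S X Y X Y = 0 := by
    intro X Y
    have h4sum : S Y X Y X + S Y X X Y + S X Y Y X + S X Y X Y = 0 := by
      refine extract11 (S X X X X) (S Y X X X + S X Y X X) (S X X Y X + S X X X Y)
        (S Y Y X X) (S X X Y Y) _ (S Y Y Y X + S Y Y X Y) (S Y X Y Y + S X Y Y Y)
        (S Y Y Y Y) ?_
      intro t
      have hd := diag (X + t • Y)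
      simp only [h1a, h1s, h2a, h2s, h3a, h3s, h4a, h4s] at hd
      linear_combination hd
    have e1 : S Y X Y X = S X Y X Y := by rw [sym12, sym34]
    have e2 : S Y X X Y = S X Y X Y := by rw [sym12]
    have e3 : S X Y Y X = S X Y X Y := by rw [sym34]
    linear_combination (1/4 : ℂ) * h4sum - (1/4 : ℂ)*e1 - (1/4 : ℂ)*e2 - (1/4 : ℂ)*e3
  have step2 : ∀ X Y Z, S Z Y X Y = 0 := by
    intro X Y Z
    have := extract10 (S X Y X Y) (S Z Y X Y) (S X Y Z Y) (S Z Y Z Y) ?_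
    · exact this.1
    intro t
    have hd := step1 (X + t • Z) Y
    simp only [h1a, h1s, h3a, h3s] at hd
    linear_combination hd
  intro A B C D
  have h := extract10 (S A B C B) (S A D C B) (S A B C D) (S A D C D) ?_
  · exact h.2
  intro t
  have hd := step2 C (B + t • D) A
  simp only [h2a, h2s, h4a, h4s] at hd
  linear_combination hd

private lemma sum_split {n : ℕ} (a b c : Fin n → ℂ) :
    (∑ i, (a i + b i) * c i) = (∑ i, a i * c i) + (∑ i, b i * c i) := by
  rw [← Finset.sum_add_distrib]; exact Finset.sum_congr rfl (by intros; ring)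

private lemma sum_split' {n : ℕ} (a b c : Fin n → ℂ) :
    (∑ i, (a i - b i) * c i) = (∑ i, a i * c i) - (∑ i, b i * c i) := by
  rw [← Finset.sum_sub_distrib]; exact Finset.sum_congr rfl (by intros; ring)

private lemma sum_single {n : ℕ} (j : Fin n) (c : Fin n → ℂ) :
    (∑ i, (if i = j then (1:ℂ) else 0) * c i) = c j := by
  rw [Finset.sum_eq_single j]
  · simp
  · intro i _ hij; simp [hij]
  · simp

private lemma dt_ext {n : ℕ} (v : Fin n → ℂ)
    (h : ∀ X : Fin n → ℂ, (∑ i, X i * v i) = 0) : v = 0 := by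
  funext j
  have := h (fun i => if i = j then 1 else 0)
  rw [sum_single] at this
  simpa using this

private lemma selfdot_ne {n : ℕ} (v : Fin n → ℂ) (hv : v ≠ 0) :
    (∑ i, (starRingEnd ℂ) (v i) * v i) ≠ 0 := by
  have hrw : (∑ i, (starRingEnd ℂ) (v i) * v i) = ((∑ i, Complex.normSq (v i) : ℝ) : ℂ) := by
    push_cast
    exact Finset.sum_congr rfl (by intro i _; rw [mul_comm, Complex.mul_conj])
  rw [hrw]
  intro h0
  apply hv
  have : (∑ i, Complex.normSq (v i)) = 0 := by exact_mod_cast h0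
  rw [Finset.sum_eq_zero_iff_of_nonneg (fun i _ => Complex.normSq_nonneg _)] at this
  funext i
  exact Complex.normSq_eq_zero.mp (this i (Finset.mem_univ i))

private lemma prod_forms_zero {n : ℕ} (v w : Fin n → ℂ)
    (h : ∀ X : Fin n → ℂ, (∑ i, X i * v i) * (∑ i, X i * w i) = 0) : v = 0 ∨ w = 0 := by
  by_contra hc
  push_neg at hc
  obtain ⟨hv, hw⟩ := hc
  set A := ∑ i, (starRingEnd ℂ) (v i) * v i with hA
  set D := ∑ i, (starRingEnd ℂ) (w i) * w i with hD
  set B := ∑ i, (starRingEnd ℂ) (w i) * v i with hB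
  set C := ∑ i, (starRingEnd ℂ) (v i) * w i with hC
  have hAne := selfdot_ne v hv
  have hDne := selfdot_ne w hw
  have h0 : A * C = 0 := h (fun i => (starRingEnd ℂ) (v i))
  have hC0 : C = 0 := by
    rcases mul_eq_zero.mp h0 with h' | h'
    · exact absurd h' hAne
    · exact h'
  have h1 : (A + B) * (C + D) = 0 := by
    have := h (fun i => (starRingEnd ℂ) (v i) + (starRingEnd ℂ) (w i))
    rwa [sum_split, sum_split] at this
  have h2 : (A - B) * (C - D) = 0 := by
    have := h (fun i => (starRingEnd ℂ) (v i) - (starRingEnd ℂ) (w i))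
    rwa [sum_split', sum_split'] at this
  rw [hC0, zero_add] at h1
  rw [hC0, zero_sub] at h2
  have hAB : A + B = 0 := by
    rcases mul_eq_zero.mp h1 with h' | h'
    · exact h'
    · exact absurd h' hDne
  have hAB' : A - B = 0 := by
    rcases mul_eq_zero.mp h2 with h' | h'
    · exact h'
    · exact absurd (neg_eq_zero.mp h') hDne
  apply hAne
  linear_combination (1/2 : ℂ) * hAB + (1/2 : ℂ) * hAB'

private lemma ker_sub {n : ℕ} (v w : Fin n → ℂ) (hv : v ≠ 0)
    (h : ∀ X : Fin n → ℂ, (∑ i, X i * v i) = 0 → (∑ i, X i * w i) = 0) :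
    ∃ c : ℂ, w = c • v := by
  set A := ∑ i, (starRingEnd ℂ) (v i) * v i with hA
  have hAne := selfdot_ne v hv
  set N := ∑ i, (starRingEnd ℂ) (v i) * w i with hN
  refine ⟨N / A, funext fun j => ?_⟩
  have key : (∑ i, ((if i = j then (1:ℂ) else 0) - (v j / A) * (starRingEnd ℂ) (v i)) * v i) = 0 := by
    rw [sum_split']
    rw [sum_single]
    have : (∑ i, ((v j / A) * (starRingEnd ℂ) (v i)) * v i)
        = (v j / A) * A := by
      rw [hA, Finset.mul_sum]; exact Finset.sum_congr rfl (by intros; ring)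
    rw [this]
    have hAne' : A ≠ 0 := hAne
    rw [div_mul_cancel₀ (v j) hAne', sub_self]
  have := h _ key
  rw [sum_split', sum_single] at this
  have h2 : (∑ i, ((v j / A) * (starRingEnd ℂ) (v i)) * w i) = (v j / A) * N := by
    rw [hN, Finset.mul_sum]; exact Finset.sum_congr rfl (by intros; ring)
  rw [h2] at this
  show w j = (N / A) * v j
  linear_combination this

private lemma union_ker {n : ℕ} (b z a : Fin n → ℂ)
    (h : ∀ X : Fin n → ℂ, (∑ i, X i * b i) = 0 →
      (∑ i, X i * z i) = 0 ∨ (∑ i, X i * a i) = 0) :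
    (∀ X : Fin n → ℂ, (∑ i, X i * b i) = 0 → (∑ i, X i * z i) = 0) ∨
    (∀ X : Fin n → ℂ, (∑ i, X i * b i) = 0 → (∑ i, X i * a i) = 0) := by
  by_cases hl : ∀ X : Fin n → ℂ, (∑ i, X i * b i) = 0 → (∑ i, X i * z i) = 0
  · exact Or.inl hl
  push_neg at hl
  obtain ⟨x, hxb, hxz⟩ := hl
  right
  intro y hyb
  by_contra hya
  have hxa : (∑ i, x i * a i) = 0 := (h x hxb).resolve_left hxz
  have hyz : (∑ i, y i * z i) = 0 := (h y hyb).resolve_right hya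
  have hxyb : (∑ i, (x i + y i) * b i) = 0 := by rw [sum_split, hxb, hyb, add_zero]
  rcases h (x + y) (by simpa using hxyb) with h' | h'
  · rw [show ((x + y : Fin n → ℂ)) = fun i => x i + y i from rfl] at h'
    rw [sum_split, hyz, add_zero] at h'
    exact hxz h'
  · rw [show ((x + y : Fin n → ℂ)) = fun i => x i + y i from rfl] at h'
    rw [sum_split, hxa, zero_add] at h'
    exact hya h'

private lemma indep_or_prop {n : ℕ} (u v : Fin n → ℂ) (hu : u ≠ 0) :
    (∃ μ : ℂ, v = μ • u) ∨ (∀ s t : ℂ, s • u + t • v = 0 → s = 0 ∧ t = 0) := by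
  by_cases hp : ∃ μ : ℂ, v = μ • u
  · exact Or.inl hp
  right
  intro s t hst
  have ht : t = 0 := by
    by_contra ht
    apply hp
    refine ⟨-s/t, funext fun i => ?_⟩
    have hi := congrFun hst i
    simp only [Pi.add_apply, Pi.smul_apply, smul_eq_mul, Pi.zero_apply] at hi
    rw [Pi.smul_apply, smul_eq_mul, div_mul_eq_mul_div, eq_div_iff ht]
    linear_combination hi
  subst ht
  refine ⟨?_, rfl⟩
  rw [zero_smul, add_zero] at hst
  rcases smul_eq_zero.mp hst with h' | h'
  · exact h'
  · exact absurd h' hu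

private lemma expand_lin {k : ℕ} (φ : (Fin k → ℂ) → ℂ)
    (hadd : ∀ u v, φ (u + v) = φ u + φ v)
    (hsmul : ∀ (c : ℂ) u, φ (c • u) = c * φ u) (u : Fin k → ℂ) :
    φ u = ∑ a, u a * φ (fun i => if i = a then 1 else 0) := by
  let L : (Fin k → ℂ) →ₗ[ℂ] ℂ :=
    { toFun := φ, map_add' := hadd, map_smul' := by intro c x; simpa using hsmul c x }
  have hu : u = ∑ a, u a • (fun i => if i = a then (1:ℂ) else 0) := by
    funext i
    rw [Finset.sum_apply]
    simp only [Pi.smul_apply, smul_eq_mul, mul_ite, mul_one, mul_zero]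
    rw [Finset.sum_ite_eq]
    simp
  calc φ u = L u := rfl
    _ = L (∑ a, u a • (fun i => if i = a then (1:ℂ) else 0)) := by rw [← hu]
    _ = ∑ a, u a * φ (fun i => if i = a then 1 else 0) := by
        rw [map_sum]
        exact Finset.sum_congr rfl (fun a _ => by rw [map_smul, smul_eq_mul]; rfl)

private lemma span_bound {n m : ℕ} (hmn : 2 * m < n)
    (F : (Fin m ⊕ Fin m) → ((Fin n → ℂ) → ℂ))
    (fam : Fin n → ((Fin n → ℂ) → ℂ))
    (hmem : ∀ j, fam j ∈ Submodule.span ℂ (Set.range F))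
    (hind : LinearIndependent ℂ fam) : False := by
  haveI : Module.Finite ℂ ↥(Submodule.span ℂ (Set.range F)) :=
    FiniteDimensional.span_of_finite ℂ (Set.finite_range F)
  have hind' : LinearIndependent ℂ
      (fun j => (⟨fam j, hmem j⟩ : ↥(Submodule.span ℂ (Set.range F)))) := by
    apply LinearIndependent.of_comp (Submodule.span ℂ (Set.range F)).subtype
    exact hind
  have h1 : Fintype.card (Fin n) ≤ Module.finrank ℂ ↥(Submodule.span ℂ (Set.range F)) :=
    hind'.fintype_card_le_finrank
  have h2 := finrank_range_le_card (R := ℂ) F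
  simp only [Set.finrank] at h2
  simp only [Fintype.card_fin, Fintype.card_sum] at h1 h2
  omega

private noncomputable def ipc {n : ℕ} (X Y : Fin n → ℂ) : ℂ := ∑ i, X i * (starRingEnd ℂ) (Y i)

private lemma ipc_add1 {n : ℕ} (X X' Y : Fin n → ℂ) :
    ipc (X + X') Y = ipc X Y + ipc X' Y := by
  simp only [ipc, Pi.add_apply]
  rw [← Finset.sum_add_distrib]
  exact Finset.sum_congr rfl (by intros; ring)

private lemma ipc_smul1 {n : ℕ} (c : ℂ) (X Y : Fin n → ℂ) :
    ipc (c • X) Y = c * ipc X Y := by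
  simp only [ipc, Pi.smul_apply, smul_eq_mul, Finset.mul_sum]
  exact Finset.sum_congr rfl (by intros; ring)

private lemma ipc_add2 {n : ℕ} (X Y Y' : Fin n → ℂ) :
    ipc X (Y + Y') = ipc X Y + ipc X Y' := by
  simp only [ipc, Pi.add_apply, map_add]
  rw [← Finset.sum_add_distrib]
  exact Finset.sum_congr rfl (by intros; ring)

private lemma ipc_smul2 {n : ℕ} (c : ℂ) (X Y : Fin n → ℂ) :
    ipc X (c • Y) = (starRingEnd ℂ c) * ipc X Y := by
  simp only [ipc, Pi.smul_apply, smul_eq_mul, map_mul, Finset.mul_sum]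
  exact Finset.sum_congr rfl (by intros; ring)

private lemma ipc_sub2 {n : ℕ} (X Y Y' : Fin n → ℂ) :
    ipc X (Y - Y') = ipc X Y - ipc X Y' := by
  simp only [ipc, Pi.sub_apply, map_sub]
  rw [← Finset.sum_sub_distrib]
  exact Finset.sum_congr rfl (by intros; ring)

private lemma ipc_single2 {n : ℕ} (X : Fin n → ℂ) (j : Fin n) :
    ipc X (fun i => if i = j then 1 else 0) = X j := by
  simp only [ipc]
  rw [Finset.sum_eq_single j]
  · simp
  · intro i _ hij; simp [hij]
  · simp

private lemma ipc_self_ne {n : ℕ} (Y : Fin n → ℂ) (hY : Y ≠ 0) : ipc Y Y ≠ 0 := by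
  have : ipc Y Y = ∑ i, (starRingEnd ℂ) (Y i) * Y i := by
    simp only [ipc]
    exact Finset.sum_congr rfl (by intros; ring)
  rw [this]
  exact selfdot_ne Y hY

private noncomputable def ESyn (m : ℕ) : Type := Fin m → ℂ
private noncomputable instance (m : ℕ) : AddCommGroup (ESyn m) :=
  inferInstanceAs (AddCommGroup (Fin m → ℂ))
private noncomputable instance (m : ℕ) : Module ℂ (ESyn m) :=
  inferInstanceAs (Module ℂ (Fin m → ℂ))
private noncomputable def toE {m : ℕ} : (Fin m → ℂ) ≃ₗ[ℂ] ESyn m :=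
  { toFun := fun x => x, invFun := fun x => x, map_add' := fun _ _ => rfl,
    map_smul' := fun _ _ => rfl, left_inv := fun _ => rfl, right_inv := fun _ => rfl }

/-- Lemma 4.1(ii), full statement: if 2m < n and the quartic forms of Π and Π̃
    differ by (X,X)·H(X,X), then H ≡ 0 and Π̃ = U ∘ Π for a unitary U of ℂᵐ. -/
theorem stmt_9 (n m : ℕ) (hn : 0 < n) (hm : 0 < m) (hmn : 2 * m < n)
    (P Pt : (Fin n → ℂ) → (Fin n → ℂ) → (Fin m → ℂ))
    (Psymm : ∀ X Y, P X Y = P Y X)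
    (Padd : ∀ X X' Y, P (X + X') Y = P X Y + P X' Y)
    (Psmul : ∀ (c : ℂ) X Y, P (c • X) Y = c • P X Y)
    (Ptsymm : ∀ X Y, Pt X Y = Pt Y X)
    (Ptadd : ∀ X X' Y, Pt (X + X') Y = Pt X Y + Pt X' Y)
    (Ptsmul : ∀ (c : ℂ) X Y, Pt (c • X) Y = c • Pt X Y)
    (ipm : (Fin m → ℂ) → (Fin m → ℂ) → ℂ)
    (ipm_add : ∀ u u' v, ipm (u + u') v = ipm u v + ipm u' v)
    (ipm_smul : ∀ (c : ℂ) u v, ipm (c • u) v = c * ipm u v)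
    (ipm_conj : ∀ u v, ipm v u = starRingEnd ℂ (ipm u v))
    (ipm_pos : ∀ u, u ≠ 0 → 0 < (ipm u u).re)
    (H : (Fin n → ℂ) → (Fin n → ℂ) → ℂ)
    (H_add : ∀ u u' v, H (u + u') v = H u v + H u' v)
    (H_smul : ∀ (c : ℂ) u v, H (c • u) v = c * H u v)
    (H_conj : ∀ u v, H v u = starRingEnd ℂ (H u v))
    (heq : ∀ X, ipm (P X X) (P X X) - ipm (Pt X X) (Pt X X)
      = (∑ i, X i * starRingEnd ℂ (X i)) * H X X) :
    (∀ X Y, H X Y = 0) ∧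
    ∃ U : (Fin m → ℂ) →ₗ[ℂ] (Fin m → ℂ), Function.Bijective U ∧
      (∀ u v, ipm (U u) (U v) = ipm u v) ∧
      ∀ X Y, Pt X Y = U (P X Y) := by
  -- derived linearity facts
  have ipm_add2 : ∀ u v v', ipm u (v + v') = ipm u v + ipm u v' := by
    intro u v v'
    calc ipm u (v + v') = starRingEnd ℂ (ipm (v + v') u) := ipm_conj _ _
      _ = starRingEnd ℂ (ipm v u) + starRingEnd ℂ (ipm v' u) := by rw [ipm_add, map_add]
      _ = ipm u v + ipm u v' := by rw [← ipm_conj, ← ipm_conj]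
  have ipm_smul2 : ∀ (c : ℂ) u v, ipm u (c • v) = starRingEnd ℂ c * ipm u v := by
    intro c u v
    calc ipm u (c • v) = starRingEnd ℂ (ipm (c • v) u) := ipm_conj _ _
      _ = starRingEnd ℂ c * starRingEnd ℂ (ipm v u) := by rw [ipm_smul, map_mul]
      _ = starRingEnd ℂ c * ipm u v := by rw [← ipm_conj]
  have ipm_zero1 : ∀ v, ipm 0 v = 0 := by
    intro v
    have h := ipm_add 0 0 v
    rw [add_zero] at h
    linear_combination -h
  have ipm_zero2 : ∀ u, ipm u 0 = 0 := by
    intro u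
    rw [ipm_conj, ipm_zero1, map_zero]
  have ipm_def : ∀ w, ipm w w = 0 → w = 0 := by
    intro w hw
    by_contra hne
    have := ipm_pos w hne
    rw [hw] at this
    simp at this
  have H_add2 : ∀ u v v', H u (v + v') = H u v + H u v' := by
    intro u v v'
    calc H u (v + v') = starRingEnd ℂ (H (v + v') u) := H_conj _ _
      _ = starRingEnd ℂ (H v u) + starRingEnd ℂ (H v' u) := by rw [H_add, map_add]
      _ = H u v + H u v' := by rw [← H_conj, ← H_conj]
  have H_smul2 : ∀ (c : ℂ) u v, H u (c • v) = starRingEnd ℂ c * H u v := by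
    intro c u v
    calc H u (c • v) = starRingEnd ℂ (H (c • v) u) := H_conj _ _
      _ = starRingEnd ℂ c * starRingEnd ℂ (H v u) := by rw [H_smul, map_mul]
      _ = starRingEnd ℂ c * H u v := by rw [← H_conj]
  have H_sub2 : ∀ u v v', H u (v - v') = H u v - H u v' := by
    intro u v v'
    have h := H_add2 u (v - v') v'
    rw [sub_add_cancel] at h
    linear_combination -h
  have H_zero2 : ∀ u, H u 0 = 0 := by
    intro u
    have h := H_add2 u 0 0
    rw [add_zero] at h
    linear_combination -h
  have Padd2 : ∀ X Y Y', P X (Y + Y') = P X Y + P X Y' := by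
    intro X Y Y'; rw [Psymm, Padd, Psymm Y X, Psymm Y' X]
  have Psmul2 : ∀ (c : ℂ) X Y, P X (c • Y) = c • P X Y := by
    intro c X Y; rw [Psymm, Psmul, Psymm Y X]
  have Ptadd2 : ∀ X Y Y', Pt X (Y + Y') = Pt X Y + Pt X Y' := by
    intro X Y Y'; rw [Ptsymm, Ptadd, Ptsymm Y X, Ptsymm Y' X]
  have Ptsmul2 : ∀ (c : ℂ) X Y, Pt X (c • Y) = c • Pt X Y := by
    intro c X Y; rw [Ptsymm, Ptsmul, Ptsymm Y X]
  have ipm_exp : ∀ u v, ipm u v = ∑ a, u a * ipm (fun i => if i = a then 1 else 0) v :=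
    fun u v => expand_lin (fun w => ipm w v) (fun a b => ipm_add a b v)
      (fun c a => ipm_smul c a v) u
  have H_exp : ∀ u v, H u v = ∑ a, u a * H (fun i => if i = a then 1 else 0) v :=
    fun u v => expand_lin (fun w => H w v) (fun a b => H_add a b v)
      (fun c a => H_smul c a v) u
  -- full polarization of the hypothesis
  have hS : ∀ X Y Z W, ipm (P X Y) (P Z W) - ipm (Pt X Y) (Pt Z W)
      - (1/4 : ℂ) * (ipc X Z * H Y W + ipc X W * H Y Z + ipc Y Z * H X W + ipc Y W * H X Z)
      = 0 := by
    refine quadpolar (fun X Y Z W => ipm (P X Y) (P Z W) - ipm (Pt X Y) (Pt Z W)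
      - (1/4 : ℂ) * (ipc X Z * H Y W + ipc X W * H Y Z + ipc Y Z * H X W + ipc Y W * H X Z))
      ?_ ?_ ?_ ?_ ?_ ?_ ?_ ?_ ?_ ?_ ?_
    · intro X X' Y Z W
      simp only [Padd, Ptadd, ipm_add, ipc_add1, H_add]; ring
    · intro c X Y Z W
      simp only [Psmul, Ptsmul, ipm_smul, ipc_smul1, H_smul]; ring
    · intro X Y Y' Z W
      simp only [Padd2, Ptadd2, ipm_add, ipc_add1, H_add]; ring
    · intro c X Y Z W
      simp only [Psmul2, Ptsmul2, ipm_smul, ipc_smul1, H_smul]; ring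
    · intro X Y Z Z' W
      simp only [Padd, Ptadd, ipm_add2, ipc_add2, H_add2]; ring
    · intro c X Y Z W
      simp only [Psmul, Ptsmul, ipm_smul2, ipc_smul2, H_smul2]; ring
    · intro X Y Z W W'
      simp only [Padd2, Ptadd2, ipm_add2, ipc_add2, H_add2]; ring
    · intro c X Y Z W
      simp only [Psmul2, Ptsmul2, ipm_smul2, ipc_smul2, H_smul2]; ring
    · intro X Y Z W
      rw [Psymm X Y, Ptsymm X Y]; ring
    · intro X Y Z W
      rw [Psymm Z W, Ptsymm Z W]; ring
    · intro X
      have h := heq X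
      rw [show (∑ i, X i * (starRingEnd ℂ) (X i)) = ipc X X from rfl] at h
      linear_combination h
  have hA : ∀ X Y, ipm (P X X) (P Y Y) - ipm (Pt X X) (Pt Y Y) = ipc X Y * H X Y := by
    intro X Y
    have h := hS X X Y Y
    linear_combination h
  -- membership of the quartic slices in the span of the 2m quadratic components
  have hq : ∀ Y, (fun X => ipc X Y * H X Y) ∈ Submodule.span ℂ
      (Set.range (Sum.elim (fun (a : Fin m) (X : Fin n → ℂ) => P X X a)
        (fun (a : Fin m) (X : Fin n → ℂ) => Pt X X a))) := by
    intro Y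
    have m1 : (fun X => ipm (P X X) (P Y Y)) ∈ Submodule.span ℂ
        (Set.range (Sum.elim (fun (a : Fin m) (X : Fin n → ℂ) => P X X a)
          (fun (a : Fin m) (X : Fin n → ℂ) => Pt X X a))) := by
      have hrep : (fun X => ipm (P X X) (P Y Y))
          = ∑ a : Fin m, ipm (fun i => if i = a then 1 else 0) (P Y Y) •
              (Sum.elim (fun (a : Fin m) (X : Fin n → ℂ) => P X X a)
                (fun (a : Fin m) (X : Fin n → ℂ) => Pt X X a)) (Sum.inl a) := by
        funext X
        rw [Finset.sum_apply]
        rw [ipm_exp (P X X) (P Y Y)]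
        refine Finset.sum_congr rfl ?_
        intro a _
        simp only [Sum.elim_inl, Pi.smul_apply, smul_eq_mul]
        ring
      rw [hrep]
      exact Submodule.sum_mem _ fun a _ =>
        Submodule.smul_mem _ _ (Submodule.subset_span ⟨Sum.inl a, rfl⟩)
    have m2 : (fun X => ipm (Pt X X) (Pt Y Y)) ∈ Submodule.span ℂ
        (Set.range (Sum.elim (fun (a : Fin m) (X : Fin n → ℂ) => P X X a)
          (fun (a : Fin m) (X : Fin n → ℂ) => Pt X X a))) := by
      have hrep : (fun X => ipm (Pt X X) (Pt Y Y))
          = ∑ a : Fin m, ipm (fun i => if i = a then 1 else 0) (Pt Y Y) •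
              (Sum.elim (fun (a : Fin m) (X : Fin n → ℂ) => P X X a)
                (fun (a : Fin m) (X : Fin n → ℂ) => Pt X X a)) (Sum.inr a) := by
        funext X
        rw [Finset.sum_apply]
        rw [ipm_exp (Pt X X) (Pt Y Y)]
        refine Finset.sum_congr rfl ?_
        intro a _
        simp only [Sum.elim_inr, Pi.smul_apply, smul_eq_mul]
        ring
      rw [hrep]
      exact Submodule.sum_mem _ fun a _ =>
        Submodule.smul_mem _ _ (Submodule.subset_span ⟨Sum.inr a, rfl⟩)
    have hfun : (fun X => ipc X Y * H X Y)
        = (fun X => ipm (P X X) (P Y Y)) - (fun X => ipm (Pt X X) (Pt Y Y)) := by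
      funext X
      simp only [Pi.sub_apply]
      linear_combination -hA X Y
    rw [hfun]
    exact Submodule.sub_mem _ m1 m2
  have hr : ∀ Y₀ Z, (fun X => ipc X Z * H X Y₀ + ipc X Y₀ * H X Z) ∈ Submodule.span ℂ
      (Set.range (Sum.elim (fun (a : Fin m) (X : Fin n → ℂ) => P X X a)
        (fun (a : Fin m) (X : Fin n → ℂ) => Pt X X a))) := by
    intro Y₀ Z
    have hmem := Submodule.sub_mem _ (Submodule.smul_mem _ ((1:ℂ)/2) (hq (Y₀ + Z)))
      (Submodule.smul_mem _ ((1:ℂ)/2) (hq (Y₀ - Z)))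
    have hfun : (fun X => ipc X Z * H X Y₀ + ipc X Y₀ * H X Z)
        = ((1:ℂ)/2) • (fun X => ipc X (Y₀+Z) * H X (Y₀+Z))
          - ((1:ℂ)/2) • (fun X => ipc X (Y₀-Z) * H X (Y₀-Z)) := by
      funext X
      simp only [Pi.sub_apply, Pi.smul_apply, smul_eq_mul, ipc_add2, ipc_sub2, H_add2, H_sub2]
      ring
    rw [hfun]
    exact hmem
  -- Part 1 : H = 0
  have hH : ∀ X Y, H X Y = 0 := by
    by_contra hcon
    push_neg at hcon
    obtain ⟨X₁, Y₁, hne⟩ := hcon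
    by_cases hprop : ∀ Y, ∃ c : ℂ, ∀ X, H X Y = c * ipc X Y
    · -- proportional case : H(·,Y) = c_Y ⟨·,Y⟩ for all Y
      choose cc hcc using hprop
      have hY₁ : Y₁ ≠ 0 := by
        rintro rfl
        exact hne (H_zero2 X₁)
      have hcY₁ : cc Y₁ ≠ 0 := by
        intro h0
        apply hne
        rw [hcc Y₁ X₁, h0, zero_mul]
      have star_ne : ∀ Y : Fin n → ℂ, Y ≠ 0 → (fun i => (starRingEnd ℂ) (Y i)) ≠ 0 := by
        intro Y hY hzero
        apply hY
        funext i
        have h := congrFun hzero i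
        simp only [Pi.zero_apply] at h
        have := congrArg (starRingEnd ℂ) h
        simpa [Complex.conj_conj] using this
      have hconst : ∀ Y Y', Y ≠ 0 → Y' ≠ 0 → cc Y = cc Y' := by
        intro Y Y' hY hY'
        rcases indep_or_prop (fun i => (starRingEnd ℂ) (Y i)) (fun i => (starRingEnd ℂ) (Y' i))
          (star_ne Y hY) with ⟨μ, hμ⟩ | hind
        · have hμ0 : μ ≠ 0 := by
            rintro rfl
            apply star_ne Y' hY'
            rw [hμ, zero_smul]
          have hY'eq : Y' = (starRingEnd ℂ μ) • Y := by
            funext i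
            have h := congrFun hμ i
            simp only [Pi.smul_apply, smul_eq_mul] at h ⊢
            have := congrArg (starRingEnd ℂ) h
            simpa [map_mul, Complex.conj_conj] using this
          have hx : (cc Y' - cc Y) * (μ * ipc Y Y) = 0 := by
            have h1 := hcc Y' Y
            have hH' : H Y Y' = μ * (cc Y * ipc Y Y) := by
              rw [hY'eq, H_smul2, Complex.conj_conj, hcc Y Y]
            have hipc' : ipc Y Y' = μ * ipc Y Y := by
              rw [hY'eq, ipc_smul2, Complex.conj_conj]
            linear_combination hH' - h1 - cc Y' * hipc'
          have hipc := ipc_self_ne Y hY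
          rcases mul_eq_zero.mp hx with h' | h'
          · linear_combination -h'
          · rcases mul_eq_zero.mp h' with h'' | h''
            · exact absurd h'' hμ0
            · exact absurd h'' hipc
        · have hu : ∀ X : Fin n → ℂ, (∑ i, X i *
              (cc (Y + Y') * (starRingEnd ℂ) ((Y + Y') i) - cc Y * (starRingEnd ℂ) (Y i)
                - cc Y' * (starRingEnd ℂ) (Y' i))) = 0 := by
            intro X
            have hsp : (∑ i, X i *
                (cc (Y + Y') * (starRingEnd ℂ) ((Y + Y') i) - cc Y * (starRingEnd ℂ) (Y i)
                  - cc Y' * (starRingEnd ℂ) (Y' i)))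
                = cc (Y + Y') * ipc X (Y + Y') - cc Y * ipc X Y - cc Y' * ipc X Y' := by
              simp only [ipc, Finset.mul_sum]
              rw [← Finset.sum_sub_distrib, ← Finset.sum_sub_distrib]
              exact Finset.sum_congr rfl (by intros; ring)
            rw [hsp, ipc_add2]
            have h1 := hcc (Y + Y') X
            rw [H_add2, hcc Y X, hcc Y' X, ipc_add2] at h1
            linear_combination -h1
          have hu0 := dt_ext _ hu
          have hcoef := hind (cc (Y + Y') - cc Y) (cc (Y + Y') - cc Y') ?_
          · obtain ⟨h1, h2⟩ := hcoef
            linear_combination h2 - h1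
          · funext i
            have h := congrFun hu0 i
            simp only [Pi.add_apply, map_add, Pi.zero_apply] at h
            simp only [Pi.add_apply, Pi.smul_apply, smul_eq_mul, Pi.zero_apply]
            linear_combination h
      refine span_bound hmn _
        (fun j => (fun X => ipc X (fun i => if i = j then 1 else 0)
          * H X (fun i => if i = j then 1 else 0)))
        (fun j => hq _) ?_
      apply Fintype.linearIndependent_iff.mpr
      intro g hg i
      have hδne : ∀ j : Fin n, (fun i => if i = j then (1:ℂ) else 0) ≠ 0 := by
        intro j h0
        have := congrFun h0 j
        simp at this
      have h0 := congrFun hg (fun k => if k = i then (1:ℂ) else 0)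
      rw [Finset.sum_apply] at h0
      rw [Finset.sum_eq_single i] at h0
      rotate_left
      · intro j _ hji
        simp [ipc_single2, hji]
      · intro hni
        exact absurd (Finset.mem_univ i) hni
      simp only [Pi.smul_apply, smul_eq_mul, ipc_single2] at h0
      try simp only [if_pos rfl, one_mul] at h0
      rw [hcc (fun k => if k = i then 1 else 0) (fun k => if k = i then 1 else 0)] at h0
      rw [ipc_single2] at h0
      try simp only [if_pos rfl, mul_one] at h0
      rcases mul_eq_zero.mp h0 with h' | h'
      · exact h'
      · rw [hconst _ Y₁ (hδne i) hY₁] at h'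
        apply absurd _ hcY₁
        simpa using h'
    · -- non-proportional case
      push_neg at hprop
      obtain ⟨Y₀, hY₀⟩ := hprop
      refine span_bound hmn _
        (fun j => (fun X => ipc X (fun i => if i = j then 1 else 0) * H X Y₀
          + ipc X Y₀ * H X (fun i => if i = j then 1 else 0)))
        (fun j => hr Y₀ _) ?_
      apply Fintype.linearIndependent_iff.mpr
      intro g hg
      suffices hgz : g = 0 by
        intro i
        rw [hgz]
        rfl
      -- the vectors of the kernel argument
      have hb_ne : (fun i => (starRingEnd ℂ) (Y₀ i)) ≠ 0 := by
        intro h0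
        have hY₀0 : Y₀ = 0 := by
          funext i
          have h := congrFun h0 i
          simp only [Pi.zero_apply] at h
          have := congrArg (starRingEnd ℂ) h
          simpa [Complex.conj_conj] using this
        obtain ⟨X', hX'⟩ := hY₀ 0
        apply hX'
        rw [hY₀0, H_zero2, zero_mul]
      have ha_ne : (fun i => H (fun k => if k = i then (1:ℂ) else 0) Y₀) ≠ 0 := by
        intro h0
        obtain ⟨X', hX'⟩ := hY₀ 0
        apply hX'
        rw [zero_mul, H_exp X' Y₀]
        refine Finset.sum_eq_zero ?_
        intro j _
        have := congrFun h0 j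
        simp only [Pi.zero_apply] at this
        rw [this, mul_zero]
      have hnp : ¬ ∃ c : ℂ, (fun i => H (fun k => if k = i then (1:ℂ) else 0) Y₀)
          = c • (fun i => (starRingEnd ℂ) (Y₀ i)) := by
        rintro ⟨c, hc⟩
        obtain ⟨X', hX'⟩ := hY₀ c
        apply hX'
        rw [H_exp X' Y₀]
        have hval : ∀ j : Fin n, H (fun k => if k = j then (1:ℂ) else 0) Y₀
            = c * (starRingEnd ℂ) (Y₀ j) := by
          intro j
          have := congrFun hc j
          simpa using this
        calc (∑ j, X' j * H (fun i => if i = j then 1 else 0) Y₀)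
            = ∑ j, X' j * (c * (starRingEnd ℂ) (Y₀ j)) :=
              Finset.sum_congr rfl (fun j _ => by rw [hval j])
          _ = c * ipc X' Y₀ := by
              simp only [ipc, Finset.mul_sum]
              exact Finset.sum_congr rfl (fun j _ => by ring)
      set b : Fin n → ℂ := fun i => (starRingEnd ℂ) (Y₀ i) with hbdef
      set a : Fin n → ℂ := fun i => H (fun k => if k = i then (1:ℂ) else 0) Y₀ with hadef
      set d : Fin n → ℂ :=
        fun i => H (fun k => if k = i then (1:ℂ) else 0) (fun k => (starRingEnd ℂ) (g k))
        with hddef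
      have hZeq : ∀ X : Fin n → ℂ, ipc X (fun i => (starRingEnd ℂ) (g i)) * H X Y₀
          + ipc X Y₀ * H X (fun i => (starRingEnd ℂ) (g i)) = 0 := by
        intro X
        have h0 := congrFun hg X
        rw [Finset.sum_apply] at h0
        simp only [Pi.smul_apply, smul_eq_mul, Pi.zero_apply] at h0
        have e1 : ipc X (fun i => (starRingEnd ℂ) (g i))
            = ∑ j, g j * ipc X (fun k => if k = j then 1 else 0) := by
          simp only [ipc_single2]
          simp only [ipc, Complex.conj_conj]
          exact Finset.sum_congr rfl (fun i _ => by ring)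
        have e2 : H X (fun i => (starRingEnd ℂ) (g i))
            = ∑ j, g j * H X (fun k => if k = j then 1 else 0) := by
          rw [H_conj (fun i => (starRingEnd ℂ) (g i)) X]
          rw [H_exp (fun i => (starRingEnd ℂ) (g i)) X]
          rw [map_sum]
          refine Finset.sum_congr rfl (fun j _ => ?_)
          rw [map_mul]
          rw [Complex.conj_conj, ← H_conj]
        rw [e1, e2]
        rw [Finset.sum_mul, Finset.mul_sum, ← Finset.sum_add_distrib]
        rw [show (∑ j, (g j * ipc X (fun k => if k = j then 1 else 0) * H X Y₀
            + ipc X Y₀ * (g j * H X (fun k => if k = j then 1 else 0))))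
          = ∑ j, g j * (ipc X (fun k => if k = j then 1 else 0) * H X Y₀
            + ipc X Y₀ * H X (fun k => if k = j then 1 else 0)) from
          Finset.sum_congr rfl (fun j _ => by ring)]
        exact h0
      have hyp : ∀ X : Fin n → ℂ, (∑ i, X i * g i) * (∑ i, X i * a i)
          + (∑ i, X i * b i) * (∑ i, X i * d i) = 0 := by
        intro X
        have h1 := hZeq X
        have f1 : ipc X (fun i => (starRingEnd ℂ) (g i)) = ∑ i, X i * g i := by
          simp only [ipc, Complex.conj_conj]
        have f2 : H X Y₀ = ∑ i, X i * a i := H_exp X Y₀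
        have f3 : ipc X Y₀ = ∑ i, X i * b i := rfl
        have f4 : H X (fun i => (starRingEnd ℂ) (g i)) = ∑ i, X i * d i :=
          H_exp X (fun i => (starRingEnd ℂ) (g i))
        rw [f1, f2, f3, f4] at h1
        exact h1
      by_contra hgne
      have husplit := union_ker b g a (fun X hXb => by
        have hh := hyp X
        rw [hXb, zero_mul, add_zero] at hh
        exact mul_eq_zero.mp hh)
      rcases husplit with hleft | hright
      · obtain ⟨c, hcg⟩ := ker_sub b g hb_ne hleft
        have hc0 : c ≠ 0 := by
          rintro rfl
          rw [zero_smul] at hcg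
          exact hgne hcg
        have hgval : (fun k => (starRingEnd ℂ) (g k)) = (starRingEnd ℂ) c • Y₀ := by
          funext k
          have hk := congrFun hcg k
          simp only [Pi.smul_apply, smul_eq_mul] at hk ⊢
          rw [hk, hbdef]
          simp only [map_mul, Complex.conj_conj]
        have hdval : ∀ i, d i = c * a i := by
          intro i
          rw [hddef]
          simp only
          rw [hgval, H_smul2, Complex.conj_conj]
        have hyp2 : ∀ X : Fin n → ℂ,
            (∑ i, X i * b i) * (∑ i, X i * ((fun i => c * a i + d i) i)) = 0 := by
          intro X
          have hh := hyp X
          have hg_eq : (∑ i, X i * g i) = c * ∑ i, X i * b i := by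
            rw [Finset.mul_sum]
            refine Finset.sum_congr rfl (fun i _ => ?_)
            have hk := congrFun hcg i
            simp only [Pi.smul_apply, smul_eq_mul] at hk
            rw [hk]; ring
          have hsum2 : (∑ i, X i * ((fun i => c * a i + d i) i))
              = c * (∑ i, X i * a i) + ∑ i, X i * d i := by
            simp only
            rw [Finset.mul_sum, ← Finset.sum_add_distrib]
            exact Finset.sum_congr rfl (fun i _ => by ring)
          rw [hsum2]
          linear_combination hh - (∑ i, X i * a i) * hg_eq
        rcases prod_forms_zero b (fun i => c * a i + d i) hyp2 with h' | h'
        · exact hb_ne h'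
        · apply ha_ne
          funext i
          have hi := congrFun h' i
          simp only [Pi.zero_apply] at hi
          rw [hdval i] at hi
          have hca : c * a i = 0 := by linear_combination (1/2 : ℂ) * hi
          rcases mul_eq_zero.mp hca with h'' | h''
          · exact absurd h'' hc0
          · exact h''
      · obtain ⟨c, hca⟩ := ker_sub b a hb_ne hright
        exact hnp ⟨c, hca⟩
  refine ⟨hH, ?_⟩
  have hB : ∀ X Y Z W, ipm (P X Y) (P Z W) = ipm (Pt X Y) (Pt Z W) := by
    intro X Y Z W
    have h := hS X Y Z W
    linear_combination h + (1/4 : ℂ) * (ipc X Z) * (hH Y W) + (1/4 : ℂ) * (ipc X W) * (hH Y Z)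
      + (1/4 : ℂ) * (ipc Y Z) * (hH X W) + (1/4 : ℂ) * (ipc Y W) * (hH X Z)
  -- bundled bilinear maps and tensor lifts
  let Pb : (Fin n → ℂ) →ₗ[ℂ] (Fin n → ℂ) →ₗ[ℂ] (Fin m → ℂ) :=
    LinearMap.mk₂ ℂ P Padd Psmul Padd2 Psmul2
  let Ptb : (Fin n → ℂ) →ₗ[ℂ] (Fin n → ℂ) →ₗ[ℂ] (Fin m → ℂ) :=
    LinearMap.mk₂ ℂ Pt Ptadd Ptsmul Ptadd2 Ptsmul2
  let ΛP : TensorProduct ℂ (Fin n → ℂ) (Fin n → ℂ) →ₗ[ℂ] (Fin m → ℂ) := TensorProduct.lift Pb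
  let ΛPt : TensorProduct ℂ (Fin n → ℂ) (Fin n → ℂ) →ₗ[ℂ] (Fin m → ℂ) := TensorProduct.lift Ptb
  have hT : ∀ u v, ipm (ΛP u) (ΛP v) = ipm (ΛPt u) (ΛPt v) := by
    intro u
    refine TensorProduct.induction_on u ?_ ?_ ?_
    · intro v; simp only [map_zero, ipm_zero1]
    · intro X Y
      intro v
      refine TensorProduct.induction_on v ?_ ?_ ?_
      · simp only [map_zero, ipm_zero2]
      · intro Z W
        simpa only [ΛP, ΛPt, Pb, Ptb, TensorProduct.lift.tmul, LinearMap.mk₂_apply] using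
          hB X Y Z W
      · intro v₁ v₂ h₁ h₂
        simp only [map_add, ipm_add2, h₁, h₂]
    · intro u₁ u₂ h₁ h₂ v
      simp only [map_add, ipm_add, h₁ v, h₂ v]
  -- pass to the synonym with the ipm inner product structure
  let ΛP' : TensorProduct ℂ (Fin n → ℂ) (Fin n → ℂ) →ₗ[ℂ] ESyn m :=
    (toE.toLinearMap).comp ΛP
  let ΛPt' : TensorProduct ℂ (Fin n → ℂ) (Fin n → ℂ) →ₗ[ℂ] ESyn m :=
    (toE.toLinearMap).comp ΛPt
  letI core : InnerProductSpace.Core ℂ (ESyn m) :=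
    { inner := fun u v => ipm (toE.symm v) (toE.symm u)
      conj_inner_symm := by intro x y; exact (ipm_conj _ _).symm
      re_inner_nonneg := by
        intro x
        rcases eq_or_ne (toE.symm x) 0 with h | h
        · have : toE.symm x = 0 := h
          simp only [this, ipm_zero1]
          simp
        · exact le_of_lt (ipm_pos _ h)
      add_left := by
        intro x y z
        exact ipm_add2 _ _ _
      smul_left := by
        intro x y r
        calc ipm (toE.symm y) (toE.symm (r • x))
            = ipm (toE.symm y) (r • toE.symm x) := by rw [map_smul]
          _ = starRingEnd ℂ r * ipm (toE.symm y) (toE.symm x) := by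
              rw [ipm_conj, ipm_smul, map_mul, ← ipm_conj]
      definite := by
        intro x hx
        have : toE.symm x = 0 := ipm_def _ hx
        have := congrArg toE this
        simpa using this }
  letI : NormedAddCommGroup (ESyn m) := core.toNormedAddCommGroup
  letI : InnerProductSpace ℂ (ESyn m) := InnerProductSpace.ofCore core.toCore
  haveI : FiniteDimensional ℂ (ESyn m) := Module.Finite.equiv (toE (m := m))
  have hinner : ∀ x y : ESyn m, (inner ℂ x y : ℂ) = ipm (toE.symm y) (toE.symm x) := fun _ _ => rfl
  have hle : LinearMap.ker ΛP' ≤ LinearMap.ker ΛPt' := by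
    intro u hu
    have hu' : ΛP u = 0 := by
      have h1 : toE (ΛP u) = 0 := hu
      have := congrArg toE.symm h1
      simpa using this
    have h0 : ipm (ΛPt u) (ΛPt u) = 0 := by
      rw [← hT u u, hu', ipm_zero1]
    have : ΛPt u = 0 := ipm_def _ h0
    show toE (ΛPt u) = 0
    rw [this]; simp
  let SP : Submodule ℂ (ESyn m) := LinearMap.range ΛP'
  let φ : SP →ₗ[ℂ] ESyn m :=
    ((LinearMap.ker ΛP').liftQ ΛPt' hle).comp (ΛP'.quotKerEquivRange.symm.toLinearMap)
  have hφ : ∀ u, φ ⟨ΛP' u, ⟨u, rfl⟩⟩ = ΛPt' u := by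
    intro u
    have h1 : ΛP'.quotKerEquivRange (Submodule.Quotient.mk u) = ⟨ΛP' u, ⟨u, rfl⟩⟩ :=
      Subtype.ext (LinearMap.quotKerEquivRange_apply_mk ΛP' u)
    have h2 : ΛP'.quotKerEquivRange.symm ⟨ΛP' u, ⟨u, rfl⟩⟩ = Submodule.Quotient.mk u := by
      rw [← h1, LinearEquiv.symm_apply_apply]
    show ((LinearMap.ker ΛP').liftQ ΛPt' hle) (ΛP'.quotKerEquivRange.symm ⟨ΛP' u, ⟨u, rfl⟩⟩) = _
    rw [h2, Submodule.liftQ_apply]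
  have hφinner : ∀ x y : SP, (inner ℂ (φ x) (φ y) : ℂ) = inner ℂ (x : ESyn m) (y : ESyn m) := by
    rintro ⟨x, u, rfl⟩ ⟨y, v, rfl⟩
    rw [hφ u, hφ v, hinner, hinner]
    show ipm (ΛPt v) (ΛPt u) = ipm (ΛP v) (ΛP u)
    exact (hT v u).symm
  let L : SP →ₗᵢ[ℂ] ESyn m := φ.isometryOfInner (by
    intro x y
    rw [hφinner x y]
    rfl)
  let Uiso : ESyn m →ₗᵢ[ℂ] ESyn m := L.extend
  have hUiso : ∀ u, Uiso (ΛP' u) = ΛPt' u := by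
    intro u
    have hext : Uiso ((⟨ΛP' u, ⟨u, rfl⟩⟩ : SP) : ESyn m) = L ⟨ΛP' u, ⟨u, rfl⟩⟩ :=
      L.extend_apply ⟨ΛP' u, ⟨u, rfl⟩⟩
    rw [show ((⟨ΛP' u, ⟨u, rfl⟩⟩ : SP) : ESyn m) = ΛP' u from rfl] at hext
    rw [hext]
    show φ _ = _
    exact hφ u
  refine ⟨(toE.symm.toLinearMap.comp Uiso.toLinearMap).comp toE.toLinearMap, ?_, ?_, ?_⟩
  · have hinj : Function.Injective (Uiso.toLinearMap) := Uiso.injective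
    have hsurj : Function.Surjective (Uiso.toLinearMap) :=
      (LinearMap.injective_iff_surjective).mp hinj
    have hbij : Function.Bijective (Uiso.toLinearMap) := ⟨hinj, hsurj⟩
    have hco : ⇑((toE.symm.toLinearMap.comp Uiso.toLinearMap).comp toE.toLinearMap)
        = ⇑toE.symm ∘ (⇑Uiso.toLinearMap ∘ ⇑toE) := rfl
    rw [hco]
    exact (toE.symm.bijective.comp (hbij.comp toE.bijective))
  · intro u v
    calc ipm (toE.symm (Uiso (toE u))) (toE.symm (Uiso (toE v)))
        = (inner ℂ (Uiso (toE v)) (Uiso (toE u)) : ℂ) := by rw [hinner]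
      _ = (inner ℂ (toE v) (toE u) : ℂ) := Uiso.inner_map_map _ _
      _ = ipm u v := by rw [hinner]; simp
  · intro X Y
    have h1 : toE (P X Y) = ΛP' (X ⊗ₜ[ℂ] Y) := by
      show toE (P X Y) = toE (ΛP (X ⊗ₜ[ℂ] Y))
      rw [show ΛP (X ⊗ₜ[ℂ] Y) = P X Y from TensorProduct.lift.tmul X Y]
    show Pt X Y = toE.symm (Uiso (toE (P X Y)))
    rw [h1, hUiso (X ⊗ₜ[ℂ] Y)]
    show Pt X Y = toE.symm (toE (ΛPt (X ⊗ₜ[ℂ] Y)))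
    rw [show ΛPt (X ⊗ₜ[ℂ] Y) = Pt X Y from TensorProduct.lift.tmul X Y]
    simp
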